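/- Let T > 0, let U : [0,T] → ℝ be continuous, and let z₀ ∈ ℂ with Im(z₀) > 0. Then there exists a function z : [0,T] → ℂ with z(0) = z₀ such that Im(z(t)) > 0 for all t ∈ [0,T], z is differentiable with z'(t) = −2/(z(t) − U(T−t)) for all t ∈ [0,T], and the function t ↦ Im(z(t)) is strictly increasing on [0,T]. -/

import Mathlib

open Set

private noncomputable def stmt8proj (ε : ℝ) (w : ℂ) : ℂ := ⟨w.re, max w.im ε⟩

private lemma stmt8proj_dist (ε : ℝ) (w₁ w₂ : ℂ) :
    dist (stmt8proj ε w₁) (stmt8proj ε w₂) ≤ dist w₁ w₂ := by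
  rw [Complex.dist_eq_re_im, Complex.dist_eq_re_im]
  have hre : (stmt8proj ε w₁).re - (stmt8proj ε w₂).re = w₁.re - w₂.re := rfl
  have him1 : (stmt8proj ε w₁).im = max w₁.im ε := rfl
  have him2 : (stmt8proj ε w₂).im = max w₂.im ε := rfl
  rw [hre, him1, him2]
  apply Real.sqrt_le_sqrt
  have h2 : (max w₁.im ε - max w₂.im ε) ^ 2 ≤ (w₁.im - w₂.im) ^ 2 := by
    rw [← sq_abs, ← sq_abs (w₁.im - w₂.im)]
    exact pow_le_pow_left₀ (abs_nonneg _) (abs_max_sub_max_le_abs _ _ _) 2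
  linarith

private lemma stmt8proj_eq (ε : ℝ) (w : ℂ) (h : ε ≤ w.im) : stmt8proj ε w = w := by
  apply Complex.ext <;> simp [stmt8proj, max_eq_left h]

private lemma stmt8_inv_lip {ε : ℝ} (hε : 0 < ε) {A B : ℂ} (hA : ε ≤ A.im) (hB : ε ≤ B.im) :
    ‖-2 / A - -2 / B‖ ≤ 2 / ε ^ 2 * ‖A - B‖ := by
  have hA0 : A ≠ 0 := fun h => by simp [h] at hA; linarith
  have hB0 : B ≠ 0 := fun h => by simp [h] at hB; linarith
  have hAn : ε ≤ ‖A‖ := hA.trans ((Complex.im_le_norm A).trans_eq rfl)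
  have hBn : ε ≤ ‖B‖ := hB.trans ((Complex.im_le_norm B).trans_eq rfl)
  have key : -2 / A - -2 / B = 2 * (A - B) / (A * B) := by
    field_simp
    ring
  have hApos : (0:ℝ) < ‖A‖ := hε.trans_le hAn
  have hBpos : (0:ℝ) < ‖B‖ := hε.trans_le hBn
  have h2 : ‖(2 : ℂ)‖ = 2 := by norm_num
  rw [key, norm_div, norm_mul, norm_mul, h2, div_le_iff₀ (mul_pos hApos hBpos)]
  have hab : ε ^ 2 ≤ ‖A‖ * ‖B‖ := by
    calc ε ^ 2 = ε * ε := sq ε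
    _ ≤ ‖A‖ * ‖B‖ := mul_le_mul hAn hBn hε.le (by linarith)
  have hεne : (ε:ℝ) ^ 2 ≠ 0 := by positivity
  calc 2 * ‖A - B‖ = 2 / ε ^ 2 * ‖A - B‖ * ε ^ 2 := by field_simp
    _ ≤ 2 / ε ^ 2 * ‖A - B‖ * (‖A‖ * ‖B‖) :=
        mul_le_mul_of_nonneg_left hab (by positivity)

/-- For initial values in the upper half-plane, the backward chordal
Loewner equation `ż(t) = −2/(z(t) − U(T−t))` has a solution on all of `[0,T]` which
stays in the upper half-plane and whose imaginary part is strictly increasing. -/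
theorem stmt_8 (T : ℝ) (hT : 0 < T) (U : ℝ → ℝ) (hU : ContinuousOn U (Set.Icc 0 T))
    (z₀ : ℂ) (hz₀ : 0 < z₀.im) :
    ∃ z : ℝ → ℂ, z 0 = z₀ ∧
      (∀ t ∈ Set.Icc (0 : ℝ) T, 0 < (z t).im ∧
        HasDerivWithinAt z (-2 / (z t - (U (T - t) : ℂ))) (Set.Icc 0 T) t) ∧
      StrictMonoOn (fun t => (z t).im) (Set.Icc (0 : ℝ) T) := by
  set ε : ℝ := z₀.im / 2 with hεdef
  have hε : 0 < ε := by positivity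
  -- the modified (cutoff) vector field
  set v : ℝ → ℂ → ℂ := fun t x => -2 / (stmt8proj ε x - (U (T - t) : ℂ)) with hv
  have him : ∀ (t : ℝ) (x : ℂ), ε ≤ (stmt8proj ε x - (U (T - t) : ℂ)).im := by
    intro t x
    have h : (stmt8proj ε x - (U (T - t) : ℂ)).im = max x.im ε := by
      rw [Complex.sub_im, Complex.ofReal_im, sub_zero]; rfl
    rw [h]
    exact le_max_right _ _
  have hne : ∀ (t : ℝ) (x : ℂ), (stmt8proj ε x - (U (T - t) : ℂ)) ≠ 0 := by
    intro t x h
    have := him t x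
    rw [h] at this
    simp at this
    linarith
  have hmaps : MapsTo (fun t : ℝ => T - t) (Icc 0 T) (Icc 0 T) := by
    intro t ht
    simp only [mem_Icc] at ht ⊢
    constructor <;> linarith [ht.1, ht.2]
  -- Picard-Lindelöf data
  have hPL : IsPicardLindelof v (tmin := 0) (tmax := T) ⟨0, le_refl 0, hT.le⟩ z₀
      (2 / ε * T).toNNReal 0 (2 / ε).toNNReal (2 / ε ^ 2).toNNReal := by
    constructor
    · intro t _
      apply LipschitzOnWith.of_dist_le_mul
      intro x _ y _
      rw [Real.coe_toNNReal _ (by positivity)]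
      have h1 : dist (v t x) (v t y) = ‖-2 / (stmt8proj ε x - (U (T - t) : ℂ)) -
          -2 / (stmt8proj ε y - (U (T - t) : ℂ))‖ := by
        rw [dist_eq_norm]
      rw [h1]
      calc ‖-2 / (stmt8proj ε x - (U (T - t) : ℂ)) -
          -2 / (stmt8proj ε y - (U (T - t) : ℂ))‖
          ≤ 2 / ε ^ 2 * ‖(stmt8proj ε x - (U (T - t) : ℂ)) -
            (stmt8proj ε y - (U (T - t) : ℂ))‖ :=
          stmt8_inv_lip hε (him t x) (him t y)
        _ = 2 / ε ^ 2 * dist (stmt8proj ε x) (stmt8proj ε y) := by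
            rw [dist_eq_norm]; ring_nf
        _ ≤ 2 / ε ^ 2 * dist x y := by
            apply mul_le_mul_of_nonneg_left (stmt8proj_dist ε x y) (by positivity)
    · intro x _
      apply ContinuousOn.div continuousOn_const
      · apply ContinuousOn.sub continuousOn_const
        exact Complex.continuous_ofReal.comp_continuousOn
          (hU.comp ((continuous_const.sub continuous_id).continuousOn) hmaps)
      · intro t _
        exact hne t x
    · intro t _ x _
      rw [hv, Real.coe_toNNReal _ (by positivity)]
      simp only [norm_div]
      have hd : ε ≤ ‖stmt8proj ε x - (U (T - t) : ℂ)‖ :=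
        (him t x).trans (Complex.im_le_norm _)
      rw [div_le_div_iff₀ (lt_of_lt_of_le hε hd) hε]
      calc ‖(-2 : ℂ)‖ * ε = 2 * ε := by norm_num
        _ ≤ 2 * ‖stmt8proj ε x - (U (T - t) : ℂ)‖ := by linarith
    · rw [max_eq_left (by simp; linarith : (0:ℝ) - 0 ≤ T - 0)]
      simp [Real.coe_toNNReal _ (by positivity : (0:ℝ) ≤ 2 / ε * T), Real.coe_toNNReal _ (by positivity : (0:ℝ) ≤ 2 / ε)]
  obtain ⟨z, hz0, hzd⟩ := hPL.exists_eq_forall_mem_Icc_hasDerivWithinAt₀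
  replace hz0 : z 0 = z₀ := hz0
  -- the imaginary part of the modified field is always positive
  have himpos : ∀ (t : ℝ) (x : ℂ), 0 < (v t x).im := by
    intro t x
    rw [hv]
    simp only [div_eq_mul_inv, Complex.mul_im, Complex.inv_im, Complex.inv_re]
    have h1 : (-2 : ℂ).re = -2 := by norm_num
    have h2 : (-2 : ℂ).im = 0 := by norm_num
    rw [h1, h2]
    have hnsq : 0 < Complex.normSq (stmt8proj ε x - (U (T - t) : ℂ)) :=
      Complex.normSq_pos.mpr (hne t x)
    have := him t x
    rw [zero_mul, add_zero]
    have : 0 < (stmt8proj ε x - (U (T - t) : ℂ)).im / Complex.normSq (stmt8proj ε x - (U (T - t) : ℂ)) := by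
      apply div_pos (lt_of_lt_of_le hε (him t x)) hnsq
    calc (0:ℝ) < 2 * ((stmt8proj ε x - (U (T - t) : ℂ)).im /
        Complex.normSq (stmt8proj ε x - (U (T - t) : ℂ))) := by linarith
      _ = -2 * (-(stmt8proj ε x - (U (T - t) : ℂ)).im /
        Complex.normSq (stmt8proj ε x - (U (T - t) : ℂ))) := by ring
  -- continuity of z on [0,T]
  have hzc : ContinuousOn z (Icc 0 T) := fun t ht => (hzd t ht).continuousWithinAt
  -- strict monotonicity of imaginary part
  have hsm : StrictMonoOn (fun t => (z t).im) (Icc 0 T) := by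
    apply strictMonoOn_of_deriv_pos (convex_Icc 0 T)
    · exact Complex.continuous_im.comp_continuousOn hzc
    · intro x hx
      rw [interior_Icc] at hx
      have hmem : Icc (0:ℝ) T ∈ nhds x := Icc_mem_nhds hx.1 hx.2
      have hda : HasDerivAt z (v x (z x)) x := (hzd x (Ioo_subset_Icc_self hx)).hasDerivAt hmem
      have him' : HasDerivAt (fun t => (z t).im) ((v x (z x)).im) x := by
        have := Complex.imCLM.hasFDerivAt.comp_hasDerivAt x hda
        exact this
      rw [him'.deriv]
      exact himpos x (z x)
  -- imaginary part stays above 2ε > ε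
  have hge : ∀ t ∈ Icc (0:ℝ) T, 2 * ε ≤ (z t).im := by
    intro t ht
    have h0 : (z 0).im = 2 * ε := by rw [hz0]; rw [hεdef]; ring
    rcases eq_or_lt_of_le ht.1 with h | h
    · rw [← h, h0]
    · have h1 : (z 0).im < (z t).im := hsm (left_mem_Icc.mpr hT.le) ht h
      linarith [h0 ▸ h1]
  refine ⟨z, hz0, fun t ht => ?_, hsm⟩
  have hzge : ε ≤ (z t).im := by linarith [hge t ht]
  have hproj : stmt8proj ε (z t) = z t := stmt8proj_eq ε (z t) hzge
  constructor
  · linarith [hge t ht]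
  · have := hzd t ht
    rw [hv] at this
    simpa [hproj] using this
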